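/- Let q ≥ 2 be an integer and define polynomials Γ_n ∈ ℂ[T] by Γ₀ = 1, Γ₁ = T, and Γ_{n+1} = Γ₁Γ_n − (q+δ_{n,1})Γ_{n−1} for n ≥ 1. Then for all m ≥ n > 0: Γ_nΓ_m = Γ_{m+n} + q^{n−1}(q+δ_{mn})Γ_{m−n} + (q−1)·Σ_{l=1}^{n−1} q^{l−1} Γ_{m+n−2l}. -/

import Mathlib

/-- the complete multiplication table of the spherical Hecke algebra of the
`(q+1)`-regular tree: for `m ≥ n > 0`,
`Γ_nΓ_m = Γ_{m+n} + q^{n−1}(q+δ_{mn})Γ_{m−n} + (q−1)·Σ_{l=1}^{n−1} q^{l−1} Γ_{m+n−2l}`. -/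
theorem stmt_8 (q : ℕ) (hq : 2 ≤ q) (Γf : ℕ → Polynomial ℂ)
    (h0 : Γf 0 = 1) (h1 : Γf 1 = Polynomial.X)
    (hrec : ∀ n : ℕ, 1 ≤ n →
      Γf (n + 1) = Γf 1 * Γf n -
        Polynomial.C ((q : ℂ) + if n = 1 then 1 else 0) * Γf (n - 1)) :
    ∀ m n : ℕ, 0 < n → n ≤ m →
      Γf n * Γf m = Γf (m + n)
        + Polynomial.C ((q : ℂ) ^ (n - 1) * ((q : ℂ) + if m = n then 1 else 0)) * Γf (m - n)
        + Polynomial.C ((q : ℂ) - 1) *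
            ∑ l ∈ Finset.Icc 1 (n - 1),
              Polynomial.C ((q : ℂ) ^ (l - 1)) * Γf (m + n - 2 * l) := by
  classical
  open Polynomial Finset in
  have hX : ∀ j : ℕ, (X : Polynomial ℂ) * Γf (j + 1) =
      Γf (j + 2) + C ((q : ℂ) + if j = 0 then 1 else 0) * Γf j := by
    intro j
    have h := hrec (j + 1) (by omega)
    rw [h1, Nat.add_sub_cancel, show j + 1 + 1 = j + 2 from by omega] at h
    simp only [show (j + 1 = 1) ↔ (j = 0) from by omega] at h
    linear_combination -h
  open Polynomial Finset in
  have key : ∀ n : ℕ, 1 ≤ n → ∀ k : ℕ,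
      Γf n * Γf (n + k) = Γf (2 * n + k)
        + C ((q : ℂ) ^ (n - 1) * ((q : ℂ) + if k = 0 then 1 else 0)) * Γf k
        + C ((q : ℂ) - 1) *
            ∑ l ∈ Finset.Icc 1 (n - 1), C ((q : ℂ) ^ (l - 1)) * Γf (2 * (n - l) + k) := by
    intro n
    induction n using Nat.strong_induction_on with
    | _ n ih =>
      intro hn k
      rcases (show n = 1 ∨ n = 2 ∨ 3 ≤ n from by omega) with h | h | h3
      · subst h
        rw [show 2 * 1 + k = k + 2 from by omega, show (1 : ℕ) - 1 = 0 from by omega,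
          show 1 + k = k + 1 from by omega, Finset.Icc_eq_empty (by omega), Finset.sum_empty,
          mul_zero, add_zero, pow_zero, one_mul, h1]
        exact hX k
      · subst h
        rw [show 2 * 2 + k = k + 4 from by omega, show (2 : ℕ) - 1 = 1 from by omega,
          show 2 + k = k + 2 from by omega, Finset.Icc_self, Finset.sum_singleton,
          show (1 : ℕ) - 1 = 0 from by omega, show 2 * (2 - 1) + k = k + 2 from by omega,
          pow_zero, pow_one]
        have h2 : Γf 2 = X * X - C ((q : ℂ) + 1) := by
          have h := hrec 1 le_rfl
          rw [h1, if_pos rfl, show (1 : ℕ) - 1 = 0 from by omega, h0, mul_one] at h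
          exact h
        have rA := hX (k + 2)
        rw [show k + 2 + 1 = k + 3 from by omega, show k + 2 + 2 = k + 4 from by omega,
          if_neg (show ¬(k + 2 = 0) from by omega), add_zero] at rA
        have rB := hX (k + 1)
        rw [show k + 1 + 1 = k + 2 from by omega, show k + 1 + 2 = k + 3 from by omega,
          if_neg (show ¬(k + 1 = 0) from by omega), add_zero] at rB
        have rC := hX k
        simp only [map_mul, map_add, map_sub, map_one, map_pow] at h2 rA rB rC ⊢
        linear_combination Γf (k + 2) * h2 + rA + X * rB + C (q : ℂ) * rC
      · -- inductive step : n = p + 3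
        obtain ⟨p, rfl⟩ : ∃ p, n = p + 3 := ⟨n - 3, by omega⟩
        have e2 := ih (p + 2) (by omega) (by omega) (k + 1)
        rw [show p + 2 + (k + 1) = p + 3 + k from by omega,
          show 2 * (p + 2) + (k + 1) = 2 * p + k + 5 from by omega,
          show p + 2 - 1 = p + 1 from by omega,
          if_neg (show ¬(k + 1 = 0) from by omega), add_zero] at e2
        have hb : (∑ l ∈ Finset.Icc 1 (p + 1), C ((q : ℂ) ^ (l - 1)) * Γf (2 * (p + 2 - l) + (k + 1)))
            = ∑ l ∈ Finset.Icc 1 (p + 1), C ((q : ℂ) ^ (l - 1)) * Γf (2 * (p + 2 - l) + k + 1) :=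
          Finset.sum_congr rfl fun l _ => by
            rw [show 2 * (p + 2 - l) + (k + 1) = 2 * (p + 2 - l) + k + 1 from by omega]
        rw [hb] at e2
        have e1 := ih (p + 1) (by omega) (by omega) (k + 2)
        rw [show p + 1 + (k + 2) = p + 3 + k from by omega,
          show 2 * (p + 1) + (k + 2) = 2 * p + k + 4 from by omega,
          show p + 1 - 1 = p from by omega,
          if_neg (show ¬(k + 2 = 0) from by omega), add_zero] at e1
        have hd : (∑ l ∈ Finset.Icc 1 p, C ((q : ℂ) ^ (l - 1)) * Γf (2 * (p + 1 - l) + (k + 2)))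
            = ∑ l ∈ Finset.Icc 1 p, C ((q : ℂ) ^ (l - 1)) * Γf (2 * (p + 1 - l) + k + 2) :=
          Finset.sum_congr rfl fun l _ => by
            rw [show 2 * (p + 1 - l) + (k + 2) = 2 * (p + 1 - l) + k + 2 from by omega]
        rw [hd] at e1
        have e0 := hrec (p + 2) (by omega)
        rw [h1, show p + 2 + 1 = p + 3 from by omega, show p + 2 - 1 = p + 1 from by omega,
          if_neg (show ¬(p + 2 = 1) from by omega), add_zero] at e0
        have r1 := hX (2 * (p + 2) + k)
        rw [show 2 * (p + 2) + k + 1 = 2 * p + k + 5 from by omega,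
          show 2 * (p + 2) + k + 2 = 2 * p + k + 6 from by omega,
          if_neg (show ¬(2 * (p + 2) + k = 0) from by omega), add_zero,
          show 2 * (p + 2) + k = 2 * p + k + 4 from by omega] at r1
        have r2 := hX k
        have hXB : (X : Polynomial ℂ) *
              (∑ l ∈ Finset.Icc 1 (p + 1), C ((q : ℂ) ^ (l - 1)) * Γf (2 * (p + 2 - l) + k + 1))
            = (∑ l ∈ Finset.Icc 1 (p + 1), C ((q : ℂ) ^ (l - 1)) * Γf (2 * (p + 2 - l) + k + 2))
              + C (q : ℂ) *
                (∑ l ∈ Finset.Icc 1 (p + 1), C ((q : ℂ) ^ (l - 1)) * Γf (2 * (p + 2 - l) + k)) := by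
          rw [Finset.mul_sum, Finset.mul_sum, ← Finset.sum_add_distrib]
          refine Finset.sum_congr rfl fun l hl => ?_
          rw [Finset.mem_Icc] at hl
          have h := hX (2 * (p + 2 - l) + k)
          rw [if_neg (show ¬(2 * (p + 2 - l) + k = 0) from by omega), add_zero] at h
          linear_combination C ((q : ℂ) ^ (l - 1)) * h
        have hA : (∑ l ∈ Finset.Icc 1 (p + 2), C ((q : ℂ) ^ (l - 1)) * Γf (2 * (p + 3 - l) + k))
            = (∑ l ∈ Finset.Icc 1 (p + 1), C ((q : ℂ) ^ (l - 1)) * Γf (2 * (p + 2 - l) + k + 2))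
              + C ((q : ℂ) ^ (p + 1)) * Γf (k + 2) := by
          conv_lhs => rw [show (p + 2 : ℕ) = p + 1 + 1 from by omega]
          rw [Finset.sum_Icc_succ_top (show (1 : ℕ) ≤ p + 1 + 1 from by omega)]
          congr 1
          · refine Finset.sum_congr rfl fun l hl => ?_
            rw [Finset.mem_Icc] at hl
            rw [show 2 * (p + 3 - l) + k = 2 * (p + 2 - l) + k + 2 from by omega]
          · rw [show p + 1 + 1 - 1 = p + 1 from by omega,
              show 2 * (p + 3 - (p + 1 + 1)) + k = k + 2 from by omega]
        have hG : (∑ l ∈ Finset.Icc 1 (p + 1), C ((q : ℂ) ^ (l - 1)) * Γf (2 * (p + 2 - l) + k))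
            = (∑ l ∈ Finset.Icc 1 p, C ((q : ℂ) ^ (l - 1)) * Γf (2 * (p + 1 - l) + k + 2))
              + C ((q : ℂ) ^ p) * Γf (k + 2) := by
          rw [Finset.sum_Icc_succ_top (show (1 : ℕ) ≤ p + 1 from by omega)]
          congr 1
          · refine Finset.sum_congr rfl fun l hl => ?_
            rw [Finset.mem_Icc] at hl
            rw [show 2 * (p + 2 - l) + k = 2 * (p + 1 - l) + k + 2 from by omega]
          · rw [show p + 1 - 1 = p from by omega,
              show 2 * (p + 2 - (p + 1)) + k = k + 2 from by omega]
        rw [show 2 * (p + 3) + k = 2 * p + k + 6 from by omega,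
          show p + 3 - 1 = p + 2 from by omega]
        simp only [map_mul, map_add, map_sub, map_one, map_pow] at e0 e1 e2 r1 r2 hXB hA hG ⊢
        linear_combination Γf (p + 3 + k) * e0 + X * e2 - C (q : ℂ) * e1 + r1
          + C (q : ℂ) ^ (p + 1) * C (q : ℂ) * r2 + (C (q : ℂ) - 1) * hXB
          + (C (q : ℂ) - 1) * C (q : ℂ) * hG - (C (q : ℂ) - 1) * hA
  intro m n hn hmn
  obtain ⟨k, rfl⟩ := Nat.exists_eq_add_of_le hmn
  have hs : (∑ l ∈ Finset.Icc 1 (n - 1),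
        Polynomial.C ((q : ℂ) ^ (l - 1)) * Γf (n + k + n - 2 * l))
      = ∑ l ∈ Finset.Icc 1 (n - 1),
        Polynomial.C ((q : ℂ) ^ (l - 1)) * Γf (2 * (n - l) + k) :=
    Finset.sum_congr rfl fun l hl => by
      rw [Finset.mem_Icc] at hl
      rw [show n + k + n - 2 * l = 2 * (n - l) + k from by omega]
  rw [hs, show n + k + n = 2 * n + k from by omega, show n + k - n = k from by omega]
  simp only [show (n + k = n) ↔ (k = 0) from by omega]
  exact key n hn k
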